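/- If p is a trigonometric polynomial of degree at most n interpolating a 2π-periodic C^∞ function x at 2n+1 equally spaced points and x has Fourier coefficients decaying like |c_m| ≤ C e^{−α|m|} for some α > 0, then sup_λ |x(λ) − p(λ)| ≤ C' e^{−αn} for some constant C' independent of n (spectral convergence of trigonometric interpolation). -/

import Mathlib

open Complex Finset

noncomputable def Eexp (r : ℤ) (t : ℝ) : ℂ := Complex.exp (Complex.I * r * (t : ℂ))

lemma Eexp_norm (r : ℤ) (t : ℝ) : ‖Eexp r t‖ = 1 := by
  have h : Complex.I * r * (t : ℂ) = ((r * t : ℝ) : ℂ) * Complex.I := by push_cast; ring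
  rw [Eexp, h, Complex.norm_exp_ofReal_mul_I]

lemma Eexp_mul (a b : ℤ) (t : ℝ) : Eexp a t * Eexp b t = Eexp (a+b) t := by
  rw [Eexp, Eexp, Eexp, ← Complex.exp_add]
  congr 1
  push_cast
  ring

lemma geom_sum_nodes (n : ℕ) (r : ℤ) :
    ∑ k : Fin (2*n+1), Eexp r (2*Real.pi*k/(2*n+1))
      = if ((2*(n:ℤ)+1) ∣ r) then ((2*n+1 : ℕ) : ℂ) else 0 := by
  have h2n : (2*(n:ℂ)+1) ≠ 0 := by
    have : (2*(n:ℂ)+1) = ((2*n+1 : ℕ) : ℂ) := by push_cast; ring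
    rw [this]
    exact Nat.cast_ne_zero.2 (Nat.succ_ne_zero _)
  have hπ : (Real.pi : ℂ) ≠ 0 := by exact_mod_cast Real.pi_ne_zero
  set z : ℂ := Complex.I * r * (2*Real.pi/(2*n+1)) with hz
  have hterm : ∀ k : Fin (2*n+1),
      Eexp r (2*Real.pi*k/(2*n+1)) = Complex.exp z ^ (k:ℕ) := by
    intro k
    rw [Eexp, ← Complex.exp_nat_mul]
    congr 1
    push_cast
    ring
  simp_rw [hterm]
  rw [Fin.sum_univ_eq_sum_range (fun k => Complex.exp z ^ k)]
  by_cases hdvd : (2*(n:ℤ)+1) ∣ r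
  · obtain ⟨j, hj⟩ := id hdvd
    have hz1 : Complex.exp z = 1 := by
      rw [Complex.exp_eq_one_iff]
      refine ⟨j, ?_⟩
      rw [hz, hj]
      push_cast
      field_simp [h2n]
    rw [if_pos hdvd]
    simp [hz1]
  · have hz1 : Complex.exp z ≠ 1 := by
      intro h
      rw [Complex.exp_eq_one_iff] at h
      obtain ⟨t, ht⟩ := h
      apply hdvd
      refine ⟨t, ?_⟩
      rw [hz] at ht
      have h2 : (r : ℂ) = ((2*(n:ℂ)+1) * t) := by
        have h3 : Complex.I * r * (2*Real.pi) = (t:ℂ) * (2*Real.pi*Complex.I) * (2*(n:ℂ)+1) := by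
          field_simp [h2n] at ht
          linear_combination (2*Real.pi*Complex.I) * ht
        have h4 : (Complex.I * (2*Real.pi)) * (r : ℂ) = (Complex.I * (2*Real.pi)) * ((2*(n:ℂ)+1) * t) := by
          linear_combination h3
        exact mul_left_cancel₀ (by simp [Complex.I_ne_zero, hπ]) h4
      exact_mod_cast h2
    rw [geom_sum_eq hz1]
    have hzN : Complex.exp z ^ (2*n+1) = 1 := by
      rw [← Complex.exp_nat_mul, hz]
      have : ((2*n+1 : ℕ):ℂ) * (Complex.I * r * (2*Real.pi/(2*(n:ℂ)+1))) = (r:ℂ) * (2*Real.pi*Complex.I) := by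
        push_cast
        field_simp [h2n]
      rw [this]
      exact_mod_cast Complex.exp_int_mul_two_pi_mul_I r
    rw [hzN]
    simp [hdvd]

def foldIdx (n : ℕ) (μ : ℤ) : ℤ := (μ + n) % (2*n+1) - n

lemma foldIdx_mem (n : ℕ) (μ : ℤ) : foldIdx n μ ∈ Finset.Icc (-(n:ℤ)) n := by
  have h1 : 0 ≤ (μ + n) % (2*n+1) := Int.emod_nonneg _ (by positivity)
  have h2 : (μ + n) % (2*(n:ℤ)+1) < 2*n+1 := Int.emod_lt_of_pos _ (by positivity)
  simp only [foldIdx, Finset.mem_Icc]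
  push_cast at h1 h2 ⊢
  omega

lemma dvd_sub_foldIdx (n : ℕ) (μ : ℤ) : (2*(n:ℤ)+1) ∣ (μ - foldIdx n μ) := by
  refine ⟨(μ + n) / (2*(n:ℤ)+1), ?_⟩
  have h := Int.emod_add_mul_ediv (μ + n) (2*(n:ℤ)+1)
  simp only [foldIdx]
  linarith [h]

lemma foldIdx_eq_iff (n : ℕ) (μ m : ℤ) (hm : m ∈ Finset.Icc (-(n:ℤ)) n) :
    foldIdx n μ = m ↔ (2*(n:ℤ)+1) ∣ (μ - m) := by
  constructor
  · rintro rfl; exact dvd_sub_foldIdx n μ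
  · intro h
    have h2 := dvd_sub_foldIdx n μ
    have h3 : (2*(n:ℤ)+1) ∣ (foldIdx n μ - m) := by
      have := dvd_sub h h2
      simpa using this
    have h4 := foldIdx_mem n μ
    rw [Finset.mem_Icc] at hm h4
    have h5 : foldIdx n μ - m = 0 := by
      refine Int.eq_zero_of_dvd_of_natAbs_lt_natAbs h3 ?_
      omega
    omega

lemma foldIdx_eq_self (n : ℕ) (μ : ℤ) (h : μ ∈ Finset.Icc (-(n:ℤ)) n) : foldIdx n μ = μ :=
  (foldIdx_eq_iff n μ μ h).2 (by simp)

noncomputable def tailMaj (n : ℕ) (C α : ℝ) (μ : ℤ) : ℝ :=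
  if μ ∈ Finset.Icc (-(n:ℤ)) n then 0 else 2*C*Real.exp (-α*|μ|)

lemma tailMaj_of_mem (n : ℕ) (C α : ℝ) {μ : ℤ} (h : μ ∈ Finset.Icc (-(n:ℤ)) n) :
    tailMaj n C α μ = 0 := if_pos h

lemma tailMaj_of_not_mem (n : ℕ) (C α : ℝ) {μ : ℤ} (h : μ ∉ Finset.Icc (-(n:ℤ)) n) :
    tailMaj n C α μ = 2*C*Real.exp (-α*|μ|) := if_neg h

def shiftE (n : ℕ) (j : ℤ) : ℤ := if 0 ≤ j then j + (n+1) else j - n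

lemma shiftE_inj (n : ℕ) : Function.Injective (shiftE n) := by
  intro a b hab
  simp only [shiftE] at hab
  split_ifs at hab <;> omega

lemma mul_exp_le (C' : ℝ) (hC' : 0 ≤ C') {a b c : ℝ} (h : a ≤ b + c) :
    C' * Real.exp a ≤ C' * Real.exp b * Real.exp c := by
  rw [mul_assoc, ← Real.exp_add]
  exact mul_le_mul_of_nonneg_left (Real.exp_le_exp.2 h) hC'

/-- If `p` is a trigonometric polynomial of degree at most `n` interpolating a `2π`-periodic
smooth function `x` at the `2n+1` equally spaced points, and `x` has Fourier coefficients
decaying like `|c_m| ≤ C e^{−α|m|}` for some `α > 0`, then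
`sup_λ |x(λ) − p(λ)| ≤ C' e^{−αn}` for some constant `C'` independent of `n`
(spectral convergence of trigonometric interpolation). -/
theorem trig_interpolation_spectral_convergence
    (x : ℝ → ℂ) (c : ℤ → ℂ) (C α : ℝ) (hα : 0 < α) (hC : 0 ≤ C)
    (hsum : Summable fun m : ℤ => ‖c m‖)
    (hx : ∀ l : ℝ, x l = ∑' m : ℤ, c m * Complex.exp (Complex.I * m * l))
    (hdecay : ∀ m : ℤ, ‖c m‖ ≤ C * Real.exp (-α * |m|)) :
    ∃ C' : ℝ, ∀ (n : ℕ) (d : ℤ → ℂ),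
      (∀ k : Fin (2 * n + 1),
        (∑ m ∈ Finset.Icc (-(n : ℤ)) (n : ℤ),
            d m * Complex.exp (Complex.I * m * (2 * Real.pi * k / (2 * n + 1))))
          = x (2 * Real.pi * k / (2 * n + 1))) →
      ∀ l : ℝ,
        ‖x l - ∑ m ∈ Finset.Icc (-(n : ℤ)) (n : ℤ), d m * Complex.exp (Complex.I * m * l)‖
          ≤ C' * Real.exp (-α * n) := by
  have hgS : Summable (fun μ : ℤ => Real.exp (-α * |μ|)) := by
    rw [summable_int_iff_summable_nat_and_neg]
    constructor <;>
    · apply Summable.congr (f := fun k : ℕ => (Real.exp (-α))^k)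
      · exact summable_geometric_of_lt_one (Real.exp_nonneg _) (Real.exp_lt_one_iff.2 (by linarith))
      · intro k; rw [← Real.exp_nat_mul]; push_cast; simp [abs_of_nonneg, neg_mul, mul_comm]
  set S : ℝ := ∑' μ : ℤ, Real.exp (-α * |μ|) with hSdef
  refine ⟨2*C*S, ?_⟩
  intro n d hint l
  have hNne : ((2*n+1:ℕ):ℂ) ≠ 0 := Nat.cast_ne_zero.2 (Nat.succ_ne_zero _)
  have hsummand : ∀ t : ℝ, Summable (fun μ : ℤ => c μ * Eexp μ t) := by
    intro t
    refine Summable.of_norm_bounded hsum ?_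
    intro μ; rw [norm_mul, Eexp_norm, mul_one]
  have hx' : ∀ t : ℝ, x t = ∑' μ : ℤ, c μ * Eexp μ t := hx
  have hint' : ∀ k : Fin (2*n+1),
      (∑ m ∈ Finset.Icc (-(n:ℤ)) n, d m * Eexp m (2*Real.pi*k/(2*n+1)))
        = x (2*Real.pi*k/(2*n+1)) := by
    intro k
    rw [← hint k]
    refine Finset.sum_congr rfl fun m _ => ?_
    congr 1
    rw [Eexp]
    push_cast
    ring
  have hsite : ∀ m' : ℤ, Summable (fun μ : ℤ => if foldIdx n μ = m' then c μ else 0) := by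
    intro m'
    refine Summable.of_norm_bounded hsum fun μ => ?_
    by_cases h : foldIdx n μ = m' <;> simp [h]
  -- Step 1: the coefficients d are the aliased Fourier coefficients
  have hd : ∀ m' ∈ Finset.Icc (-(n:ℤ)) n,
      d m' = ∑' μ : ℤ, (if foldIdx n μ = m' then c μ else 0) := by
    intro m' hm'
    have hA1 : ∑ k : Fin (2*n+1),
        x (2*Real.pi*k/(2*n+1)) * Eexp (-m') (2*Real.pi*k/(2*n+1))
        = d m' * ((2*n+1:ℕ):ℂ) := by
      have e1 : ∀ k : Fin (2*n+1), x (2*Real.pi*k/(2*n+1)) * Eexp (-m') (2*Real.pi*k/(2*n+1))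
          = ∑ m ∈ Finset.Icc (-(n:ℤ)) n, d m * Eexp (m - m') (2*Real.pi*k/(2*n+1)) := by
        intro k
        rw [← hint' k, Finset.sum_mul]
        refine Finset.sum_congr rfl fun m _ => ?_
        rw [mul_assoc, Eexp_mul, sub_eq_add_neg]
      rw [Finset.sum_congr rfl (fun k _ => e1 k), Finset.sum_comm]
      have e2 : ∀ m : ℤ, ∑ k : Fin (2*n+1), d m * Eexp (m - m') (2*Real.pi*k/(2*n+1))
          = d m * (if (2*(n:ℤ)+1) ∣ (m - m') then ((2*n+1:ℕ):ℂ) else 0) := by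
        intro m
        rw [← Finset.mul_sum, geom_sum_nodes]
      rw [Finset.sum_congr rfl (fun m _ => e2 m)]
      have e3 : ∀ m ∈ Finset.Icc (-(n:ℤ)) n,
          d m * (if (2*(n:ℤ)+1) ∣ (m - m') then ((2*n+1:ℕ):ℂ) else 0)
            = if m = m' then d m * ((2*n+1:ℕ):ℂ) else 0 := by
        intro m hm
        have hiff : (2*(n:ℤ)+1) ∣ (m - m') ↔ m = m' := by
          rw [← foldIdx_eq_iff n m m' hm', foldIdx_eq_self n m hm]
        by_cases h : m = m'
        · rw [if_pos (hiff.2 h), if_pos h]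
        · rw [if_neg (fun hc => h (hiff.1 hc)), if_neg h, mul_zero]
      rw [Finset.sum_congr rfl e3, Finset.sum_ite_eq' _ m' (fun m => d m * ((2*n+1:ℕ):ℂ)),
        if_pos hm']
    have hA2 : ∑ k : Fin (2*n+1),
        x (2*Real.pi*k/(2*n+1)) * Eexp (-m') (2*Real.pi*k/(2*n+1))
        = ((2*n+1:ℕ):ℂ) * ∑' μ : ℤ, (if foldIdx n μ = m' then c μ else 0) := by
      have e1 : ∀ k : Fin (2*n+1), x (2*Real.pi*k/(2*n+1)) * Eexp (-m') (2*Real.pi*k/(2*n+1))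
          = ∑' μ : ℤ, c μ * Eexp (μ - m') (2*Real.pi*k/(2*n+1)) := by
        intro k
        rw [hx', ← tsum_mul_right]
        exact tsum_congr fun μ => by rw [mul_assoc, Eexp_mul, sub_eq_add_neg]
      rw [Finset.sum_congr rfl (fun k _ => e1 k)]
      rw [← Summable.tsum_finsetSum (fun k _ => by
        refine Summable.of_norm_bounded hsum fun μ => ?_
        rw [norm_mul, Eexp_norm, mul_one])]
      have e2 : ∀ μ : ℤ, ∑ k : Fin (2*n+1), c μ * Eexp (μ - m') (2*Real.pi*k/(2*n+1))
          = ((2*n+1:ℕ):ℂ) * (if foldIdx n μ = m' then c μ else 0) := by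
        intro μ
        rw [← Finset.mul_sum, geom_sum_nodes]
        by_cases h : foldIdx n μ = m'
        · rw [if_pos ((foldIdx_eq_iff n μ m' hm').1 h), if_pos h, mul_comm]
        · rw [if_neg (fun hc => h ((foldIdx_eq_iff n μ m' hm').2 hc)), if_neg h, mul_zero, mul_zero]
      rw [tsum_congr e2, tsum_mul_left]
    have := hA1.symm.trans hA2
    have h2 : ((2*n+1:ℕ):ℂ) * d m' = ((2*n+1:ℕ):ℂ) * ∑' μ : ℤ, (if foldIdx n μ = m' then c μ else 0) := by
      rw [mul_comm]; exact this
    exact mul_left_cancel₀ hNne h2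
  -- Step 2: the interpolant as a folded series
  have hfold_summ : Summable (fun μ : ℤ => c μ * Eexp (foldIdx n μ) l) := by
    refine Summable.of_norm_bounded hsum fun μ => ?_
    rw [norm_mul, Eexp_norm, mul_one]
  have hP : ∑ m ∈ Finset.Icc (-(n:ℤ)) n, d m * Eexp m l
      = ∑' μ : ℤ, c μ * Eexp (foldIdx n μ) l := by
    have e1 : ∀ m ∈ Finset.Icc (-(n:ℤ)) n, d m * Eexp m l
        = ∑' μ : ℤ, (if foldIdx n μ = m then c μ * Eexp m l else 0) := by
      intro m hm
      rw [hd m hm, ← tsum_mul_right]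
      exact tsum_congr fun μ => by by_cases h : foldIdx n μ = m <;> simp [h]
    rw [Finset.sum_congr rfl e1]
    rw [← Summable.tsum_finsetSum (fun m _ => by
      refine Summable.of_norm_bounded hsum fun μ => ?_
      by_cases h : foldIdx n μ = m
      · rw [if_pos h, norm_mul, Eexp_norm, mul_one]
      · rw [if_neg h, norm_zero]; exact norm_nonneg _)]
    refine tsum_congr fun μ => ?_
    rw [Finset.sum_ite_eq _ (foldIdx n μ) (fun m => c μ * Eexp m l), if_pos (foldIdx_mem n μ)]
  -- Step 3: the error bound
  have hh_nonneg : ∀ μ, 0 ≤ tailMaj n C α μ := by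
    intro μ
    by_cases hμ : μ ∈ Finset.Icc (-(n:ℤ)) n
    · rw [tailMaj_of_mem n C α hμ]
    · rw [tailMaj_of_not_mem n C α hμ]; positivity
  have hh_summ : Summable (tailMaj n C α) := by
    refine Summable.of_nonneg_of_le hh_nonneg (fun μ => ?_) (hgS.mul_left (2*C))
    by_cases hμ : μ ∈ Finset.Icc (-(n:ℤ)) n
    · rw [tailMaj_of_mem n C α hμ]; positivity
    · rw [tailMaj_of_not_mem n C α hμ]
  have hbound : ∀ μ : ℤ, ‖c μ * Eexp μ l - c μ * Eexp (foldIdx n μ) l‖ ≤ tailMaj n C α μ := by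
    intro μ
    by_cases hμ : μ ∈ Finset.Icc (-(n:ℤ)) n
    · rw [foldIdx_eq_self n μ hμ, sub_self, norm_zero]
      exact hh_nonneg μ
    · refine (norm_sub_le _ _).trans ?_
      simp only [norm_mul, Eexp_norm, mul_one]
      rw [tailMaj_of_not_mem n C α hμ]
      have := hdecay μ
      linarith
  have hdiffsumm : Summable (fun μ : ℤ => ‖c μ * Eexp μ l - c μ * Eexp (foldIdx n μ) l‖) :=
    Summable.of_nonneg_of_le (fun μ => norm_nonneg _) hbound hh_summ
  have hnorm1 : ‖x l - ∑ m ∈ Finset.Icc (-(n:ℤ)) n, d m * Eexp m l‖ ≤ ∑' μ, tailMaj n C α μ := by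
    rw [hx' l, hP, ← Summable.tsum_sub (hsummand l) hfold_summ]
    exact (norm_tsum_le_tsum_norm hdiffsumm).trans (Summable.tsum_le_tsum hbound hdiffsumm hh_summ)
  -- tail estimate
  have htail : ∑' μ, tailMaj n C α μ ≤ 2*C*S * Real.exp (-α*n) := by
    have hsupp : Function.support (tailMaj n C α) ⊆ Set.range (shiftE n) := by
      intro μ hμ
      have hnot : μ ∉ Finset.Icc (-(n:ℤ)) n := by
        intro hc
        exact hμ (tailMaj_of_mem n C α hc)
      rw [Finset.mem_Icc, not_and_or, not_le, not_le] at hnot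
      rcases hnot with hlt | hgt
      · exact ⟨μ + n, by simp only [shiftE]; rw [if_neg (by omega)]; omega⟩
      · exact ⟨μ - (n+1), by simp only [shiftE]; rw [if_pos (by omega)]; omega⟩
    have heq : ∑' μ, tailMaj n C α μ = ∑' j, tailMaj n C α (shiftE n j) :=
      ((shiftE_inj n).tsum_eq hsupp).symm
    have hcomp_summ : Summable (fun j => tailMaj n C α (shiftE n j)) :=
      hh_summ.comp_injective (shiftE_inj n)
    have hterm : ∀ j : ℤ, tailMaj n C α (shiftE n j)
        ≤ (2*C*Real.exp (-α*n)) * Real.exp (-α*|j|) := by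
      intro j
      by_cases hj : 0 ≤ j
      · have hej : shiftE n j = j + (n+1) := by simp only [shiftE]; rw [if_pos hj]
        have hmem : (j + (n+1) : ℤ) ∉ Finset.Icc (-(n:ℤ)) n := by
          rw [Finset.mem_Icc]; omega
        rw [hej, tailMaj_of_not_mem n C α hmem]
        refine mul_exp_le (2*C) (by positivity) ?_
        rw [abs_of_nonneg hj]
        push_cast [abs_of_nonneg (show (0:ℤ) ≤ j + (n+1) by omega)]
        nlinarith [hα.le, (show (0:ℝ) ≤ (j:ℝ) by exact_mod_cast hj)]
      · have hej : shiftE n j = j - n := by simp only [shiftE]; rw [if_neg hj]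
        have hmem : (j - n : ℤ) ∉ Finset.Icc (-(n:ℤ)) n := by
          rw [Finset.mem_Icc]; omega
        rw [hej, tailMaj_of_not_mem n C α hmem]
        refine mul_exp_le (2*C) (by positivity) ?_
        rw [abs_of_nonpos (show (j:ℤ) ≤ 0 by omega),
          abs_of_nonpos (show (j - (n:ℤ)) ≤ 0 by omega)]
        push_cast
        ring_nf
        nlinarith [hα.le]
    calc ∑' μ, tailMaj n C α μ = ∑' j, tailMaj n C α (shiftE n j) := heq
      _ ≤ ∑' j : ℤ, (2*C*Real.exp (-α*n)) * Real.exp (-α*|j|) :=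
          Summable.tsum_le_tsum hterm hcomp_summ (hgS.mul_left _)
      _ = (2*C*Real.exp (-α*n)) * S := by rw [tsum_mul_left]
      _ = 2*C*S * Real.exp (-α*n) := by ring
  calc ‖x l - ∑ m ∈ Finset.Icc (-(n:ℤ)) n, d m * Eexp m l‖ ≤ ∑' μ, tailMaj n C α μ := hnorm1
    _ ≤ 2*C*S * Real.exp (-α*n) := htail
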